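/- For a k-element subset I of {1,…,n} with d_I ≠ 0 and the coordinate system (q_I, p_{Ī}) on L_{Y,a}, the Jacobian Jac_I of the projection π : L_{Y,a} → ℂ^n, (q,p) ↦ q, with respect to coordinates (q_I, p_{Ī}) on the source and (q₁,…,qₙ) on the target, satisfies d_I² · Jac_I = (−1)^{n−k} Σ_{M ⊂ {1,…,n}, |M| = n−k} d_{M̄}² ∏_{j∈M} aⱼ/pⱼ². In particular, d_I² Jac_I is independent of the choice of I. -/

import Mathlib

open Matrix Finset

/-- The span `Y ⊂ ℂⁿ` of the rows `bⁱ = (bⁱ₁, …, bⁱₙ)`. -/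
noncomputable def rowSpan (n k : ℕ) (b : Fin n → Fin k → ℂ) :
    Submodule ℂ (Fin n → ℂ) :=
  Submodule.span ℂ (Set.range fun i : Fin k => fun j : Fin n => b j i)

/-- The annihilator `Y^⊥ ⊂ (ℂⁿ)* ≅ ℂⁿ` of a subspace `Y ⊂ ℂⁿ`. -/
noncomputable def annSub (n : ℕ) (Y : Submodule ℂ (Fin n → ℂ)) :
    Submodule ℂ (Fin n → ℂ) where
  carrier := {β | ∀ y ∈ Y, ∑ j, β j * y j = 0}
  add_mem' := by
    intro β γ hβ hγ y hy
    have h1 := hβ y hy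
    have h2 := hγ y hy
    simp only [Pi.add_apply, add_mul]
    rw [Finset.sum_add_distrib, h1, h2, add_zero]
  zero_mem' := by intro y hy; simp
  smul_mem' := by
    intro c β hβ y hy
    have h1 := hβ y hy
    simp only [Pi.smul_apply, smul_eq_mul, mul_assoc]
    rw [← Finset.mul_sum, h1, mul_zero]


open Matrix Finset

namespace Stmt12

variable {n k : ℕ}

/-- The fixed identification `Fin k ⊕ Fin (n-k) ≃ Fin n` (requires `k ≤ n`). -/
noncomputable def mixE (hkn : k ≤ n) : (Fin k ⊕ Fin (n - k)) ≃ Fin n :=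
  finSumFinEquiv.trans (finCongr (by omega))

lemma compl_card {S : Finset (Fin n)} (hS : S.card = k) : Sᶜ.card = n - k := by
  rw [Finset.card_compl, hS, Fintype.card_fin]

section Mats

variable (B : Matrix (Fin n) (Fin k) ℂ) (C : Matrix (Fin n) (Fin (n - k)) ℂ)

/-- `d_S`, in the same orientation as the theorem statement. -/
def ddet (S : Finset (Fin n)) (hS : S.card = k) : ℂ :=
  Matrix.det (Matrix.of fun i l : Fin k => B ((S.orderIsoOfFin hS) l).1 i)

/-- determinant of the rows of `C` indexed by `Sᶜ`. -/
def cdet (S : Finset (Fin n)) (hSc : Sᶜ.card = n - k) : ℂ :=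
  Matrix.det (Matrix.of fun m m' : Fin (n - k) => C ((Sᶜ.orderIsoOfFin hSc) m).1 m')

/-- The matrix `[P_S B | P_{Sᶜ} C]`. -/
def Amat (S : Finset (Fin n)) : Matrix (Fin n) (Fin k ⊕ Fin (n - k)) ℂ :=
  Matrix.of fun j x => Sum.elim (fun l => if j ∈ S then B j l else 0)
    (fun m => if j ∈ S then 0 else C j m) x

/-- The matrix `[B | E_{Sᶜ}]`. -/
def Mmat (S : Finset (Fin n)) (hSc : Sᶜ.card = n - k) :
    Matrix (Fin n) (Fin k ⊕ Fin (n - k)) ℂ :=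
  Matrix.of fun j x => Sum.elim (fun l => B j l)
    (fun m => if j = ((Sᶜ.orderIsoOfFin hSc) m).1 then 1 else 0) x

/-- The matrix `[E_T | C]`. -/
def Nmat (T : Finset (Fin n)) (hT : T.card = k) :
    Matrix (Fin n) (Fin k ⊕ Fin (n - k)) ℂ :=
  Matrix.of fun j x => Sum.elim (fun l => if j = ((T.orderIsoOfFin hT) l).1 then 1 else 0)
    (fun m => C j m) x

/-- block triangular transfer matrix. -/
def Tmat (S : Finset (Fin n)) (hSc : Sᶜ.card = n - k) :
    Matrix (Fin k ⊕ Fin (n - k)) (Fin k ⊕ Fin (n - k)) ℂ :=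
  Matrix.fromBlocks 1 0
    (Matrix.of fun m l => -B ((Sᶜ.orderIsoOfFin hSc) m).1 l)
    (Matrix.of fun m m' => C ((Sᶜ.orderIsoOfFin hSc) m).1 m')

variable (hkn : k ≤ n)

noncomputable def Kdet (S : Finset (Fin n)) : ℂ :=
  ((Amat B C S).submatrix id ⇑(mixE hkn).symm).det

noncomputable def Pdet (S : Finset (Fin n)) (hSc : Sᶜ.card = n - k) : ℂ :=
  ((Mmat B S hSc).submatrix id ⇑(mixE hkn).symm).det

noncomputable def Qdet (T : Finset (Fin n)) (hT : T.card = k) : ℂ :=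
  ((Nmat C T hT).submatrix id ⇑(mixE hkn).symm).det

end Mats

end Stmt12

namespace Stmt12

variable {n k : ℕ}

lemma esum (S : Finset (Fin n)) (hSc : Sᶜ.card = n - k) (j : Fin n) (f : Fin n → ℂ) :
    (∑ m, (if j = ((Sᶜ.orderIsoOfFin hSc) m).1 then 1 else 0) * f ((Sᶜ.orderIsoOfFin hSc) m).1)
      = if j ∈ Sᶜ then f j else 0 := by
  by_cases hj : j ∈ Sᶜ
  · have hcond : ∀ m : Fin (n - k), (j = ((Sᶜ.orderIsoOfFin hSc) m).1)
        ↔ m = (Sᶜ.orderIsoOfFin hSc).symm ⟨j, hj⟩ := by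
      intro m
      constructor
      · intro h
        have : (⟨j, hj⟩ : {x // x ∈ Sᶜ}) = (Sᶜ.orderIsoOfFin hSc) m := Subtype.ext h
        rw [this, OrderIso.symm_apply_apply]
      · rintro rfl
        rw [OrderIso.apply_symm_apply]
    simp_rw [hcond]
    rw [Finset.sum_eq_single ((Sᶜ.orderIsoOfFin hSc).symm ⟨j, hj⟩)]
    · rw [if_pos rfl, one_mul, OrderIso.apply_symm_apply, if_pos hj]
    · intro m _ hm
      rw [if_neg hm, zero_mul]
    · intro h; exact absurd (Finset.mem_univ _) h
  · rw [if_neg hj]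
    apply Finset.sum_eq_zero
    intro m _
    have : ¬ (j = ((Sᶜ.orderIsoOfFin hSc) m).1) := by
      intro h
      exact hj (h ▸ ((Sᶜ.orderIsoOfFin hSc) m).2)
    rw [if_neg this, zero_mul]

section Facts

variable (B : Matrix (Fin n) (Fin k) ℂ) (C : Matrix (Fin n) (Fin (n - k)) ℂ)

lemma Amat_eq (S : Finset (Fin n)) (hSc : Sᶜ.card = n - k) :
    Amat B C S = Mmat B S hSc * Tmat B C S hSc := by
  ext j x
  rw [Matrix.mul_apply, Fintype.sum_sum_type]
  cases x with
  | inl l =>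
    have h1 : (∑ l' : Fin k, Mmat B S hSc j (Sum.inl l') * Tmat B C S hSc (Sum.inl l') (Sum.inl l))
        = B j l := by
      simp [Mmat, Tmat, Matrix.fromBlocks, Matrix.one_apply, mul_ite]
    have h2 : (∑ m : Fin (n - k), Mmat B S hSc j (Sum.inr m) * Tmat B C S hSc (Sum.inr m) (Sum.inl l))
        = if j ∈ Sᶜ then -B j l else 0 := by
      rw [← esum S hSc j (fun x => -B x l)]
      simp [Mmat, Tmat, Matrix.fromBlocks]
    rw [h1, h2]
    by_cases hj : j ∈ S
    · rw [if_neg (by simpa using hj)]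
      simp [Amat, hj]
    · rw [if_pos (by simpa using hj)]
      simp [Amat, hj]
  | inr m =>
    have h1 : (∑ l' : Fin k, Mmat B S hSc j (Sum.inl l') * Tmat B C S hSc (Sum.inl l') (Sum.inr m))
        = 0 := by
      simp [Mmat, Tmat, Matrix.fromBlocks]
    have h2 : (∑ m' : Fin (n - k), Mmat B S hSc j (Sum.inr m') * Tmat B C S hSc (Sum.inr m') (Sum.inr m))
        = if j ∈ Sᶜ then C j m else 0 := by
      rw [← esum S hSc j (fun x => C x m)]
      simp [Mmat, Tmat, Matrix.fromBlocks]
    rw [h1, h2]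
    by_cases hj : j ∈ S
    · rw [if_neg (by simpa using hj)]
      simp [Amat, hj]
    · rw [if_pos (by simpa using hj)]
      simp [Amat, hj]

variable (hkn : k ≤ n)

lemma Kfact (S : Finset (Fin n)) (hSc : Sᶜ.card = n - k) :
    Kdet B C hkn S = Pdet B hkn S hSc * cdet C S hSc := by
  rw [Kdet, Amat_eq B C S hSc,
    ← Matrix.submatrix_mul_equiv (Mmat B S hSc) (Tmat B C S hSc) id (mixE hkn).symm
      ⇑(mixE hkn).symm,
    Matrix.det_mul, Matrix.det_submatrix_equiv_self]
  rw [Tmat, Matrix.det_fromBlocks_zero₁₂, Matrix.det_one, one_mul]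
  rfl

lemma PQfact (orth : ∀ l m, ∑ j, B j l * C j m = 0) (S T : Finset (Fin n))
    (hSc : Sᶜ.card = n - k) (hT : T.card = k) :
    Pdet B hkn S hSc * Qdet C hkn T hT = ddet B T hT * cdet C S hSc := by
  have step1 : Pdet B hkn S hSc * Qdet C hkn T hT
      = ((Mmat B S hSc)ᵀ * (Nmat C T hT)).det := by
    rw [Pdet, Qdet, ← Matrix.det_transpose ((Mmat B S hSc).submatrix id ⇑(mixE hkn).symm),
      ← Matrix.det_mul]
    have hmm : ((Mmat B S hSc).submatrix id ⇑(mixE hkn).symm)ᵀ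
        * ((Nmat C T hT).submatrix id ⇑(mixE hkn).symm)
        = ((Mmat B S hSc)ᵀ * (Nmat C T hT)).submatrix ⇑(mixE hkn).symm ⇑(mixE hkn).symm := by
      ext x y
      simp [Matrix.mul_apply, Matrix.transpose_apply, Matrix.submatrix_apply]
    rw [hmm, Matrix.det_submatrix_equiv_self]
  rw [step1]
  have hblocks : (Mmat B S hSc)ᵀ * (Nmat C T hT)
      = Matrix.fromBlocks
          (Matrix.of fun i l : Fin k => B ((T.orderIsoOfFin hT) l).1 i) 0
          (Matrix.of fun m l => if ((T.orderIsoOfFin hT) l).1 = ((Sᶜ.orderIsoOfFin hSc) m).1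
            then (1:ℂ) else 0)
          (Matrix.of fun m m' => C ((Sᶜ.orderIsoOfFin hSc) m).1 m') := by
    ext x y
    cases x with
    | inl l =>
      cases y with
      | inl l' =>
        simp only [Matrix.mul_apply, Matrix.transpose_apply, Mmat, Nmat, Matrix.of_apply,
          Sum.elim_inl, Matrix.fromBlocks_apply₁₁]
        simp [mul_ite]
        show (∑ j, B j l * if j = (T.orderEmbOfFin hT) l' then (1:ℂ) else 0)
          = B ((T.orderEmbOfFin hT) l') l
        rw [Fintype.sum_eq_single ((T.orderEmbOfFin hT) l') (fun j hj => by rw [if_neg hj, mul_zero]),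
          if_pos rfl, mul_one]
      | inr m =>
        simp only [Matrix.mul_apply, Matrix.transpose_apply, Mmat, Nmat, Matrix.of_apply,
          Sum.elim_inl, Sum.elim_inr, Matrix.fromBlocks_apply₁₂]
        simpa using orth l m
    | inr m =>
      cases y with
      | inl l' =>
        simp only [Matrix.mul_apply, Matrix.transpose_apply, Mmat, Nmat, Matrix.of_apply,
          Sum.elim_inl, Sum.elim_inr, Matrix.fromBlocks_apply₂₁]
        simp [ite_mul]
        show (∑ j, (if j = (Sᶜ.orderEmbOfFin hSc) m then (1:ℂ) else 0)
            * if j = (T.orderEmbOfFin hT) l' then (1:ℂ) else 0)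
          = if (T.orderEmbOfFin hT) l' = (Sᶜ.orderEmbOfFin hSc) m then 1 else 0
        rw [Fintype.sum_eq_single ((Sᶜ.orderEmbOfFin hSc) m) (fun j hj => by rw [if_neg hj, zero_mul]),
          if_pos rfl, one_mul]
        exact if_congr eq_comm rfl rfl
      | inr m' =>
        simp only [Matrix.mul_apply, Matrix.transpose_apply, Mmat, Nmat, Matrix.of_apply,
          Sum.elim_inr, Matrix.fromBlocks_apply₂₂]
        simp [ite_mul]
        show (∑ j, (if j = (Sᶜ.orderEmbOfFin hSc) m then (1:ℂ) else 0) * C j m')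
          = C ((Sᶜ.orderEmbOfFin hSc) m) m'
        rw [Fintype.sum_eq_single ((Sᶜ.orderEmbOfFin hSc) m) (fun j hj => by rw [if_neg hj, zero_mul]),
          if_pos rfl, one_mul]
  rw [hblocks, Matrix.det_fromBlocks_zero₁₂]
  rfl

end Facts

end Stmt12

namespace Stmt12

variable {n k : ℕ}

/-- The equivalence `Fin k ⊕ Fin (n-k) ≃ Fin n` determined by `S`. -/
noncomputable def splitE (S : Finset (Fin n)) (hS : S.card = k) (hSc : Sᶜ.card = n - k) :
    (Fin k ⊕ Fin (n - k)) ≃ Fin n := by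
  apply Equiv.ofBijective
    (Sum.elim (fun l => ((S.orderIsoOfFin hS) l).1) (fun m => ((Sᶜ.orderIsoOfFin hSc) m).1))
  rw [Fintype.bijective_iff_injective_and_card]
  constructor
  · rintro (l | m) (l' | m') h <;> simp only [Sum.elim_inl, Sum.elim_inr] at h
    · rw [Sum.inl.injEq]
      exact (S.orderIsoOfFin hS).injective (Subtype.ext h)
    · exact absurd (h ▸ ((S.orderIsoOfFin hS) l).2) (Finset.mem_compl.mp ((Sᶜ.orderIsoOfFin hSc) m').2)
    · exact absurd (h ▸ ((Sᶜ.orderIsoOfFin hSc) m).2) (by simpa using ((S.orderIsoOfFin hS) l').2)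
    · rw [Sum.inr.injEq]
      exact (Sᶜ.orderIsoOfFin hSc).injective (Subtype.ext h)
  · have hk : k ≤ n := by
      have h := Finset.card_le_univ S
      rw [hS] at h
      simpa using h
    simp [Fintype.card_sum]
    omega

lemma Psq (B : Matrix (Fin n) (Fin k) ℂ) (hkn : k ≤ n) (S : Finset (Fin n))
    (hS : S.card = k) (hSc : Sᶜ.card = n - k) :
    (Pdet B hkn S hSc) ^ 2 = (ddet B S hS) ^ 2 := by
  set eS := splitE S hS hSc with heS
  set N' := (Mmat B S hSc).submatrix ⇑eS id with hN'
  set σ : Equiv.Perm (Fin n) := (mixE hkn).symm.trans eS with hσ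
  have h1 : (Mmat B S hSc).submatrix id ⇑(mixE hkn).symm
      = (N'.submatrix ⇑eS.symm ⇑eS.symm).submatrix id ⇑σ := by
    ext x y
    simp [hN', Matrix.submatrix_apply, hσ, Equiv.apply_symm_apply]
  have h2 : Pdet B hkn S hSc = (Equiv.Perm.sign σ : ℂ) * N'.det := by
    rw [Pdet, h1, Matrix.det_permute', Matrix.det_submatrix_equiv_self]
  have h3 : N'.det = ddet B S hS := by
    have hblock : N' = Matrix.fromBlocks
        (Matrix.of fun i l : Fin k => B ((S.orderIsoOfFin hS) l).1 i)ᵀ 0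
        (Matrix.of fun m l => B ((Sᶜ.orderIsoOfFin hSc) m).1 l) 1 := by
      ext x y
      cases x with
      | inl l =>
        cases y with
        | inl l' => simp [hN', Mmat, heS, splitE, Matrix.transpose_apply]
        | inr m =>
          simp only [hN', Matrix.submatrix_apply, Mmat, Matrix.of_apply, Sum.elim_inr,
            Matrix.fromBlocks_apply₁₂, heS, splitE, Equiv.ofBijective_apply, Sum.elim_inl,
            Matrix.zero_apply, id_eq]
          rw [if_neg]
          intro h
          exact absurd (h ▸ ((S.orderIsoOfFin hS) l).2)
            (Finset.mem_compl.mp ((Sᶜ.orderIsoOfFin hSc) m).2)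
      | inr m =>
        cases y with
        | inl l' => simp [hN', Mmat, heS, splitE]
        | inr m' =>
          simp only [hN', Matrix.submatrix_apply, Mmat, Matrix.of_apply, Sum.elim_inr,
            Matrix.fromBlocks_apply₂₂, heS, splitE, Equiv.ofBijective_apply,
            Matrix.one_apply, id_eq]
          by_cases h : m = m'
          · subst h; simp
          · rw [if_neg, if_neg h]
            intro hc
            exact h ((Sᶜ.orderIsoOfFin hSc).injective (Subtype.ext hc))
    rw [hblock, Matrix.det_fromBlocks_zero₁₂, Matrix.det_one, mul_one, Matrix.det_transpose]
    rfl
  rw [h2, h3, mul_pow]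
  rcases Int.units_eq_one_or (Equiv.Perm.sign σ) with h | h <;> rw [h] <;> norm_num

lemma core (B : Matrix (Fin n) (Fin k) ℂ) (C : Matrix (Fin n) (Fin (n - k)) ℂ)
    (orth : ∀ l m, ∑ j, B j l * C j m = 0) (hkn : k ≤ n)
    (S T : Finset (Fin n)) (hS : S.card = k) (hT : T.card = k)
    (hdT : ddet B T hT ≠ 0) :
    ddet B T hT ^ 2 * Kdet B C hkn S = ddet B S hS ^ 2 * Kdet B C hkn T := by
  have hSc := compl_card hS
  have hTc := compl_card hT
  have e1 := PQfact B C hkn orth S T hSc hT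
  have e2 := PQfact B C hkn orth T T hTc hT
  have e3 := Psq B hkn S hS hSc
  have e4 := Psq B hkn T hT hTc
  rw [Kfact B C hkn S hSc, Kfact B C hkn T hTc]
  apply mul_left_cancel₀ hdT
  linear_combination (ddet B T hT ^ 2 * Qdet C hkn T hT) * e3
    - (ddet B T hT ^ 2 * Pdet B hkn S hSc) * e1
    - (ddet B S hS ^ 2 * Qdet C hkn T hT) * e4
    + (ddet B S hS ^ 2 * Pdet B hkn T hTc) * e2

end Stmt12

namespace Stmt12

variable {n k : ℕ}

lemma ddet_congr (B : Matrix (Fin n) (Fin k) ℂ) {s t : Finset (Fin n)} (hst : s = t)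
    (hs : s.card = k) (ht : t.card = k) : ddet B s hs = ddet B t ht := by
  subst hst; rfl

/-- the linear map zeroing out coordinates outside `S`. -/
def maskMap (S : Finset (Fin n)) : (Fin n → ℂ) →ₗ[ℂ] (Fin n → ℂ) where
  toFun y := fun i => if i ∈ S then y i else 0
  map_add' x y := by funext i; by_cases h : i ∈ S <;> simp [h]
  map_smul' c x := by funext i; by_cases h : i ∈ S <;> simp [h]

lemma maskMap_mem_span (S : Finset (Fin n)) (y : Fin n → ℂ) :
    maskMap S y ∈ Submodule.span ℂ ((fun j => Pi.single j (1 : ℂ)) '' ↑S) := by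
  have : maskMap S y = ∑ j ∈ S, y j • (Pi.single j (1 : ℂ) : Fin n → ℂ) := by
    funext i
    rw [Finset.sum_apply]
    simp only [Pi.smul_apply, Pi.single_apply, smul_eq_mul, mul_ite, mul_one, mul_zero]
    rw [Finset.sum_ite_eq S i y]
    rfl
  rw [this]
  exact Submodule.sum_mem _ fun j hj => Submodule.smul_mem _ _
    (Submodule.subset_span ⟨j, hj, rfl⟩)

lemma finrank_mask_le (S : Finset (Fin n)) (p : Submodule ℂ (Fin n → ℂ)) :
    Module.finrank ℂ ↥(p.map (maskMap S)) ≤ S.card := by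
  have h1 : p.map (maskMap S) ≤ Submodule.span ℂ ((fun j => Pi.single j (1 : ℂ)) '' ↑S) := by
    rintro x ⟨y, _, rfl⟩
    exact maskMap_mem_span S y
  refine (Submodule.finrank_mono h1).trans ?_
  refine (finrank_span_le_card _).trans ?_
  rw [Set.toFinset_image]
  refine Finset.card_image_le.trans ?_
  simp

/-- finrank of a product of submodules. -/
lemma finrank_prod_sub (p q : Submodule ℂ (Fin n → ℂ)) :
    Module.finrank ℂ ↥(p.prod q) = Module.finrank ℂ ↥p + Module.finrank ℂ ↥q := by
  have e : ↥(p.prod q) ≃ₗ[ℂ] (↥p × ↥q) :=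
    { toFun := fun x => (⟨x.1.1, x.2.1⟩, ⟨x.1.2, x.2.2⟩)
      map_add' := fun x y => rfl
      map_smul' := fun c x => rfl
      invFun := fun y => ⟨(y.1.1, y.2.1), ⟨y.1.2, y.2.2⟩⟩
      left_inv := fun x => rfl
      right_inv := fun y => rfl }
  rw [e.finrank_eq, Module.finrank_prod]

lemma det_vanish (S : Finset (Fin n)) (Y Yp : Submodule ℂ (Fin n → ℂ))
    (V W : Matrix (Fin n) (Fin n) ℂ)
    (hV : ∀ c, (fun i => V i c) ∈ Y) (hW : ∀ c, (fun i => W i c) ∈ Yp)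
    (hsum : Module.finrank ℂ ↥Y + Module.finrank ℂ ↥Yp = n)
    (hcard : S.card ≠ Module.finrank ℂ ↥Y) :
    (Matrix.of fun i c => if i ∈ S then V i c else W i c).det = 0 := by
  classical
  set Z1 := Y.map (maskMap S) with hZ1
  set Z2 := Yp.map (maskMap Sᶜ) with hZ2
  set Z := Z1 ⊔ Z2 with hZ
  have hcolmem : ∀ c : Fin n, (fun i => if i ∈ S then V i c else W i c) ∈ Z := by
    intro c
    have : (fun i => if i ∈ S then V i c else W i c)
        = maskMap S (fun i => V i c) + maskMap Sᶜ (fun i => W i c) := by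
      funext i
      by_cases h : i ∈ S <;> simp [maskMap, h]
    rw [this]
    exact Submodule.add_mem _
      (Submodule.mem_sup_left (Submodule.mem_map_of_mem (hV c)))
      (Submodule.mem_sup_right (Submodule.mem_map_of_mem (hW c)))
  have hZlt : Module.finrank ℂ ↥Z < n := by
    have hle : Module.finrank ℂ ↥Z ≤ Module.finrank ℂ ↥Z1 + Module.finrank ℂ ↥Z2 := by
      have h := Submodule.finrank_sup_add_finrank_inf_eq Z1 Z2
      rw [hZ]
      omega
    have b1a : Module.finrank ℂ ↥Z1 ≤ Module.finrank ℂ ↥Y := Submodule.finrank_map_le _ _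
    have b1b : Module.finrank ℂ ↥Z1 ≤ S.card := finrank_mask_le S Y
    have b2a : Module.finrank ℂ ↥Z2 ≤ Module.finrank ℂ ↥Yp := Submodule.finrank_map_le _ _
    have b2b : Module.finrank ℂ ↥Z2 ≤ Sᶜ.card := finrank_mask_le Sᶜ Yp
    have hSc : Sᶜ.card = n - S.card := by
      rw [Finset.card_compl, Fintype.card_fin]
    have hSn : S.card ≤ n := by
      have := Finset.card_le_univ S
      simpa using this
    rcases lt_or_gt_of_ne hcard with hlt | hgt
    · calc Module.finrank ℂ ↥Z ≤ Module.finrank ℂ ↥Z1 + Module.finrank ℂ ↥Z2 := hle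
        _ < n := by omega
    · calc Module.finrank ℂ ↥Z ≤ Module.finrank ℂ ↥Z1 + Module.finrank ℂ ↥Z2 := hle
        _ < n := by omega
  have hnli : ¬ LinearIndependent ℂ (fun c : Fin n => (⟨_, hcolmem c⟩ : ↥Z)) := by
    intro hli
    have h1 := finrank_span_eq_card hli
    have h2 : Module.finrank ℂ ↥(Submodule.span ℂ (Set.range
        (fun c : Fin n => (⟨_, hcolmem c⟩ : ↥Z)))) ≤ Module.finrank ℂ ↥Z :=
      Submodule.finrank_le _
    rw [h1, Fintype.card_fin] at h2
    omega
  obtain ⟨g, hg, c₀, hc₀⟩ := Fintype.not_linearIndependent_iff.mp hnli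
  rw [← Matrix.exists_mulVec_eq_zero_iff]
  refine ⟨g, fun h => hc₀ (by rw [h]; rfl), ?_⟩
  funext i
  have := congrArg Subtype.val hg
  rw [AddSubmonoidClass.coe_finset_sum] at this
  have h3 := congrFun this i
  rw [Finset.sum_apply] at h3
  simp only [Pi.smul_apply, SetLike.mk_smul_mk, smul_eq_mul] at h3
  simp only [Matrix.mulVec, dotProduct, Matrix.of_apply, Pi.zero_apply]
  have h4 : (∑ x : Fin n, g x * if i ∈ S then V i x else W i x) = 0 := by
    simpa using h3
  rw [← h4]
  apply Finset.sum_congr rfl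
  intro c _
  rw [mul_comm]

end Stmt12


set_option maxHeartbeats 1000000 in
theorem stmt_12 (n k : ℕ) (hkn : k ≤ n) (b : Fin n → Fin k → ℂ)
    (a p : Fin n → ℂ) (ha : ∀ j, a j ≠ 0) (hp : ∀ j, p j ≠ 0)
    (hpY : ∀ i, ∑ j, b j i * p j = 0)
    (I : Finset (Fin n)) (hI : I.card = k)
    (hdI : Matrix.det (Matrix.of fun i l : Fin k => b ((I.orderIsoOfFin hI) l).1 i) ≠ 0)
    (u : (Fin n → ℂ) →ₗ[ℂ] ((Fin n → ℂ) × (Fin n → ℂ)))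
    (hui : Function.Injective u)
    (hur : LinearMap.range u = (rowSpan n k b).prod (annSub n (rowSpan n k b)))
    (MA MB : Matrix (Fin n) (Fin n) ℂ)
    (hMA : ∀ i c, MA i c
      = (u (Pi.single c 1)).1 i - a i / (p i) ^ 2 * (u (Pi.single c 1)).2 i)
    (hMB : ∀ i c, MB i c = if i ∈ I then MA i c else (u (Pi.single c 1)).2 i)
    (hcoord : MB.det ≠ 0) :
    (Matrix.det (Matrix.of fun i l : Fin k => b ((I.orderIsoOfFin hI) l).1 i)) ^ 2
        * MA.det
      = ((-1) ^ (n - k) *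
          ∑ M ∈ (Finset.powersetCard (n - k) (Finset.univ : Finset (Fin n))).attach,
            (Matrix.det (Matrix.of fun i l : Fin k =>
                b (((M.1ᶜ).orderIsoOfFin (show (M.1)ᶜ.card = k by
                  rw [Finset.card_compl, (Finset.mem_powersetCard.mp M.2).2,
                    Fintype.card_fin]
                  omega) l).1) i)) ^ 2
              * ∏ j ∈ M.1, a j / (p j) ^ 2) * MB.det := by
  classical
  set Y := rowSpan n k b with hYdef
  set Yp := annSub n (rowSpan n k b) with hYpdef
  set v : Fin k → (Fin n → ℂ) := fun i => fun j => b j i with hv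
  -- nonzero determinant, transposed form
  have hDT : (Matrix.of fun l i : Fin k => b ((I.orderIsoOfFin hI) l).1 i).det ≠ 0 := by
    have heq : (Matrix.of fun l i : Fin k => b ((I.orderIsoOfFin hI) l).1 i)
        = (Matrix.of fun i l : Fin k => b ((I.orderIsoOfFin hI) l).1 i)ᵀ := rfl
    rw [heq, Matrix.det_transpose]
    exact hdI
  -- linear independence of the rows bⁱ
  have li : LinearIndependent ℂ v := by
    rw [Fintype.linearIndependent_iff]
    intro g hg
    set Dm : Matrix (Fin k) (Fin k) ℂ :=
      Matrix.of fun l i : Fin k => b ((I.orderIsoOfFin hI) l).1 i with hDm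
    have hmv : Dm.mulVec g = 0 := by
      funext l
      have h1 := congrFun hg ((I.orderIsoOfFin hI) l).1
      rw [Finset.sum_apply] at h1
      simp only [Pi.smul_apply, smul_eq_mul, Pi.zero_apply] at h1
      simp only [Matrix.mulVec, dotProduct, hDm, Matrix.of_apply, Pi.zero_apply]
      rw [← h1]
      exact Finset.sum_congr rfl fun i _ => mul_comm _ _
    have hunit : IsUnit Dm := (Matrix.isUnit_iff_isUnit_det Dm).mpr (isUnit_iff_ne_zero.mpr hDT)
    have hinj : Function.Injective Dm.mulVec := Matrix.mulVec_injective_iff_isUnit.mpr hunit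
    intro i
    have hg0 : g = 0 := hinj (by rw [hmv, Matrix.mulVec_zero])
    rw [hg0]; rfl
  -- dimensions
  have frY : Module.finrank ℂ ↥Y = k := by
    rw [show Y = Submodule.span ℂ (Set.range v) from rfl, finrank_span_eq_card li,
      Fintype.card_fin]
  have frprod : Module.finrank ℂ ↥(Y.prod Yp) = n := by
    rw [← hur, LinearMap.finrank_range_of_inj hui, Module.finrank_fin_fun]
  have frYp : Module.finrank ℂ ↥Yp = n - k := by
    have := Stmt12.finrank_prod_sub Y Yp
    omega
  -- bases
  let bY : Module.Basis (Fin k) ℂ ↥Y := Module.Basis.span li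
  let bC : Module.Basis (Fin (n - k)) ℂ ↥Yp := Module.finBasisOfFinrankEq ℂ ↥Yp frYp
  set Bm : Matrix (Fin n) (Fin k) ℂ := Matrix.of b with hBm
  set Cm : Matrix (Fin n) (Fin (n - k)) ℂ :=
    Matrix.of (fun j m => (bC m : Fin n → ℂ) j) with hCm
  have hvY : ∀ l : Fin k, v l ∈ Y := fun l => Submodule.subset_span ⟨l, rfl⟩
  have orth : ∀ l m, ∑ j, Bm j l * Cm j m = 0 := by
    intro l m
    have hmem : ∀ y ∈ Y, ∑ j, (bC m : Fin n → ℂ) j * y j = 0 := (bC m).2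
    have h := hmem (v l) (hvY l)
    rw [← h]
    exact Finset.sum_congr rfl fun j _ => mul_comm _ _
  -- membership of the u-columns
  have humem : ∀ c : Fin n, u (Pi.single c 1) ∈ Y.prod Yp := fun c => by
    rw [← hur]; exact LinearMap.mem_range_self u _
  have hV1 : ∀ c, (u (Pi.single c 1)).1 ∈ Y := fun c => ((Submodule.mem_prod).mp (humem c)).1
  have hW1 : ∀ c, (u (Pi.single c 1)).2 ∈ Yp := fun c => ((Submodule.mem_prod).mp (humem c)).2
  -- matrices V W G H
  set V : Matrix (Fin n) (Fin n) ℂ := Matrix.of (fun i c => (u (Pi.single c 1)).1 i) with hVm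
  set W : Matrix (Fin n) (Fin n) ℂ := Matrix.of (fun i c => (u (Pi.single c 1)).2 i) with hWm
  set G : Matrix (Fin k) (Fin n) ℂ :=
    Matrix.of (fun l c => (bY.repr ⟨(u (Pi.single c 1)).1, hV1 c⟩) l) with hGm
  set H : Matrix (Fin (n - k)) (Fin n) ℂ :=
    Matrix.of (fun m c => (bC.repr ⟨(u (Pi.single c 1)).2, hW1 c⟩) m) with hHm
  have hVBG : ∀ i c, V i c = ∑ l, Bm i l * G l c := by
    intro i c
    have h := bY.sum_repr ⟨(u (Pi.single c 1)).1, hV1 c⟩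
    have h2 := congrArg Subtype.val h
    rw [AddSubmonoidClass.coe_finset_sum] at h2
    have h3 := congrFun h2 i
    rw [Finset.sum_apply] at h3
    simp only [SetLike.val_smul, Pi.smul_apply, smul_eq_mul] at h3
    show (u (Pi.single c 1)).1 i = _
    rw [← h3]
    apply Finset.sum_congr rfl
    intro l _
    have hb : ((bY l : ↥Y) : Fin n → ℂ) = v l := congrArg Subtype.val (Module.Basis.span_apply li l)
    rw [hb, mul_comm]
    rfl
  have hWCH : ∀ i c, W i c = ∑ m, Cm i m * H m c := by
    intro i c
    have h := bC.sum_repr ⟨(u (Pi.single c 1)).2, hW1 c⟩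
    have h2 := congrArg Subtype.val h
    rw [AddSubmonoidClass.coe_finset_sum] at h2
    have h3 := congrFun h2 i
    rw [Finset.sum_apply] at h3
    simp only [SetLike.val_smul, Pi.smul_apply, smul_eq_mul] at h3
    show (u (Pi.single c 1)).2 i = _
    rw [← h3]
    exact Finset.sum_congr rfl fun m _ => mul_comm _ _
  -- the factor U and the determinants N S
  set U : Matrix (Fin k ⊕ Fin (n - k)) (Fin n) ℂ :=
    Matrix.of (fun x c => Sum.elim (fun l => G l c) (fun m => H m c) x) with hU
  set μ : ℂ := (U.submatrix ⇑(Stmt12.mixE hkn).symm id).det with hμ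
  set Rm : Finset (Fin n) → Matrix (Fin n) (Fin n) ℂ :=
    fun S => Matrix.of (fun i c => if i ∈ S then V i c else W i c) with hRm
  have hRU : ∀ S : Finset (Fin n), Rm S = Stmt12.Amat Bm Cm S * U := by
    intro S
    ext i c
    rw [Matrix.mul_apply, Fintype.sum_sum_type]
    simp only [Stmt12.Amat, Matrix.of_apply, Sum.elim_inl, Sum.elim_inr, hU]
    by_cases hi : i ∈ S
    · simp only [hi, if_true, hRm, Matrix.of_apply]
      rw [hVBG i c]
      simp
    · simp only [hi, if_false, hRm, Matrix.of_apply]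
      rw [hWCH i c]
      simp
  have hNK : ∀ S : Finset (Fin n), (Rm S).det = Stmt12.Kdet Bm Cm hkn S * μ := by
    intro S
    have hstep : Stmt12.Amat Bm Cm S * U
        = ((Stmt12.Amat Bm Cm S).submatrix id ⇑(Stmt12.mixE hkn).symm)
          * (U.submatrix ⇑(Stmt12.mixE hkn).symm id) := by
      rw [Matrix.submatrix_mul_equiv]
      rfl
    rw [hRU S, hstep, Matrix.det_mul]
    rfl
  have hvanish : ∀ S : Finset (Fin n), S.card ≠ k → (Rm S).det = 0 := by
    intro S hc
    exact Stmt12.det_vanish S Y Yp V W (fun c => hV1 c) (fun c => hW1 c)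
      (by rw [frY, frYp]; omega) (by rw [frY]; exact hc)
  -- multilinear expansion machinery
  have expand : ∀ X X' : Matrix (Fin n) (Fin n) ℂ,
      (X + X').det = ∑ s : Finset (Fin n), Matrix.det (s.piecewise X X') :=
    fun X X' => Matrix.detRowAlternating.toMultilinearMap.map_add_univ X X'
  set d : Fin n → ℂ := fun j => a j / p j ^ 2 with hd
  -- expansion of det MA
  set Wneg : Matrix (Fin n) (Fin n) ℂ := Matrix.of (fun i c => -(d i) * W i c) with hWneg
  have hMAadd : MA = V + Wneg := by
    ext i c
    rw [hMA i c]
    simp only [Matrix.add_apply, hWneg, Matrix.of_apply, hVm, hWm, hd]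
    ring
  have hMAdet : MA.det = ∑ s : Finset (Fin n), (∏ i ∈ sᶜ, -(d i)) * (Rm s).det := by
    rw [hMAadd, expand]
    apply Finset.sum_congr rfl
    intro s _
    have hmat : (s.piecewise V Wneg : Matrix (Fin n) (Fin n) ℂ)
        = Matrix.of (fun i c => (if i ∈ s then 1 else -(d i)) * Rm s i c) := by
      ext i c
      by_cases hi : i ∈ s <;>
        simp [Finset.piecewise, hi, hRm, hWneg]
    rw [hmat, Matrix.det_mul_column]
    congr 1
    rw [← Finset.prod_mul_prod_compl s]
    rw [Finset.prod_congr rfl (fun i hi => if_pos hi), Finset.prod_const_one, one_mul]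
    exact Finset.prod_congr rfl (fun i hi => if_neg (Finset.mem_compl.mp hi))
  -- expansion of det MB
  set Ynt : Matrix (Fin n) (Fin n) ℂ :=
    Matrix.of (fun i c => if i ∈ I then -(d i) * W i c else 0) with hYnt
  have hMBadd : MB = Rm I + Ynt := by
    ext i c
    rw [hMB i c]
    by_cases hi : i ∈ I
    · rw [if_pos hi, hMA i c]
      simp only [Matrix.add_apply, hRm, hYnt, Matrix.of_apply, if_pos hi, hVm, hWm, hd]
      ring
    · rw [if_neg hi]
      simp only [Matrix.add_apply, hRm, hYnt, Matrix.of_apply, if_neg hi, hWm]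
      ring
  have hMBdet : MB.det = (Rm I).det := by
    rw [hMBadd, expand]
    rw [Fintype.sum_eq_single Finset.univ]
    · exact congrArg Matrix.det (Finset.piecewise_univ (Rm I) Ynt)
    · intro s hs
      by_cases hsub : Iᶜ ⊆ s
      · have hInotsub : ¬ I ⊆ s := by
          intro hIs
          apply hs
          apply Finset.eq_univ_iff_forall.mpr
          intro x
          by_cases hx : x ∈ I
          · exact hIs hx
          · exact hsub (Finset.mem_compl.mpr hx)
        have hmat : s.piecewise (Rm I) Ynt
            = Matrix.of (fun i c => (if i ∈ s then 1 else -(d i)) * Rm (s ∩ I) i c) := by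
          ext i c
          by_cases hi : i ∈ s
          · have hii : i ∈ s ∩ I ↔ i ∈ I := by simp [Finset.mem_inter, hi]
            by_cases hiI : i ∈ I <;>
              simp [Finset.piecewise, hi, hRm, hiI, hii.mpr, Finset.mem_inter]
          · have hiI : i ∈ I := by
              by_contra hiI
              exact hi (hsub (Finset.mem_compl.mpr hiI))
            have hni : i ∉ s ∩ I := by simp [hi]
            simp [Finset.piecewise, hi, hYnt, hRm, hiI, hni]
        rw [hmat, Matrix.det_mul_column]
        have hz : (Rm (s ∩ I)).det = 0 := by
          apply hvanish
          intro hcard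
          apply hInotsub
          have hsub2 : s ∩ I ⊆ I := Finset.inter_subset_right
          have hSI : s ∩ I = I := Finset.eq_of_subset_of_card_le hsub2 (by rw [hcard, hI])
          exact fun x hx => (Finset.mem_inter.mp (hSI ▸ hx)).1
        rw [hz, mul_zero]
      · obtain ⟨i, hiIc, his⟩ := Finset.not_subset.mp hsub
        apply Matrix.det_eq_zero_of_row_eq_zero i
        intro j
        simp [Finset.piecewise, his, hYnt, Finset.mem_compl.mp hiIc]
  -- the key exchange identity
  have hdd : Stmt12.ddet Bm I hI ≠ 0 := hdI
  have key : ∀ (s : Finset (Fin n)) (hs : s.card = k),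
      (Stmt12.ddet Bm I hI) ^ 2 * (Rm s).det
        = (Stmt12.ddet Bm s hs) ^ 2 * (Rm I).det := by
    intro s hs
    rw [hNK s, hNK I]
    have hc := Stmt12.core Bm Cm orth hkn s I hs hI hdd
    linear_combination μ * hc
  -- total version of d_S
  set dd2 : Finset (Fin n) → ℂ :=
    fun s => if h : s.card = k then Stmt12.ddet Bm s h else 0 with hdd2
  -- assembling the left side
  have hL1 : ∀ s : Finset (Fin n),
      (Stmt12.ddet Bm I hI) ^ 2 * ((∏ i ∈ sᶜ, -(d i)) * (Rm s).det)
      = (∏ i ∈ sᶜ, -(d i)) * ((dd2 s) ^ 2 * (Rm I).det) := by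
    intro s
    by_cases hs : s.card = k
    · have hk := key s hs
      simp only [hdd2, dif_pos hs]
      linear_combination (∏ i ∈ sᶜ, -(d i)) * hk
    · rw [hvanish s hs]
      simp only [hdd2, dif_neg hs]
      ring
  have hL2 : (∑ s : Finset (Fin n), (∏ i ∈ sᶜ, -(d i)) * ((dd2 s) ^ 2 * (Rm I).det))
      = ∑ s ∈ Finset.powersetCard k (Finset.univ : Finset (Fin n)),
          (∏ i ∈ sᶜ, -(d i)) * ((dd2 s) ^ 2 * (Rm I).det) := by
    symm
    apply Finset.sum_subset (Finset.subset_univ _)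
    intro s _ hs
    rw [Finset.mem_powersetCard_univ] at hs
    simp only [hdd2, dif_neg hs]
    ring
  have hL3 : ∀ s ∈ Finset.powersetCard k (Finset.univ : Finset (Fin n)),
      (∏ i ∈ sᶜ, -(d i)) * ((dd2 s) ^ 2 * (Rm I).det)
      = (-1 : ℂ) ^ (n - k) * ((dd2 s) ^ 2 * ∏ i ∈ sᶜ, d i) * (Rm I).det := by
    intro s hs
    rw [Finset.mem_powersetCard_univ] at hs
    have hcc : sᶜ.card = n - k := Stmt12.compl_card hs
    have hneg : (∏ i ∈ sᶜ, -(d i)) = (-1 : ℂ) ^ (n - k) * ∏ i ∈ sᶜ, d i := by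
      rw [Finset.prod_congr rfl (fun i _ => (neg_one_mul (d i)).symm),
        Finset.prod_mul_distrib, Finset.prod_const, hcc]
    rw [hneg]
    ring
  -- assembling the right side
  have hR1 : ∀ M ∈ (Finset.powersetCard (n - k) (Finset.univ : Finset (Fin n))).attach,
      (Matrix.det (Matrix.of fun i l : Fin k =>
          b (((M.1ᶜ).orderIsoOfFin (show (M.1)ᶜ.card = k by
            rw [Finset.card_compl, (Finset.mem_powersetCard.mp M.2).2,
              Fintype.card_fin]
            omega) l).1) i)) ^ 2
        * ∏ j ∈ M.1, a j / (p j) ^ 2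
      = (dd2 M.1ᶜ) ^ 2 * ∏ j ∈ M.1, d j := by
    intro M _
    have hMc : (M.1ᶜ).card = k := by
      rw [Finset.card_compl, (Finset.mem_powersetCard.mp M.2).2, Fintype.card_fin]
      omega
    simp only [hdd2, dif_pos hMc]
    rfl
  have hR2 : (∑ M ∈ (Finset.powersetCard (n - k) (Finset.univ : Finset (Fin n))).attach,
        (dd2 M.1ᶜ) ^ 2 * ∏ j ∈ M.1, d j)
      = ∑ M ∈ Finset.powersetCard (n - k) (Finset.univ : Finset (Fin n)),
          (dd2 Mᶜ) ^ 2 * ∏ j ∈ M, d j :=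
    Finset.sum_attach _ (fun M => (dd2 Mᶜ) ^ 2 * ∏ j ∈ M, d j)
  have hR3 : (∑ M ∈ Finset.powersetCard (n - k) (Finset.univ : Finset (Fin n)),
        (dd2 Mᶜ) ^ 2 * ∏ j ∈ M, d j)
      = ∑ s ∈ Finset.powersetCard k (Finset.univ : Finset (Fin n)),
          (dd2 s) ^ 2 * ∏ i ∈ sᶜ, d i := by
    apply Finset.sum_nbij' (i := fun M => Mᶜ) (j := fun s => sᶜ)
    · intro M hM
      rw [Finset.mem_powersetCard_univ] at hM ⊢
      rw [Finset.card_compl, hM, Fintype.card_fin]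
      omega
    · intro s hs
      rw [Finset.mem_powersetCard_univ] at hs ⊢
      rw [Finset.card_compl, hs, Fintype.card_fin]
    · intro M _
      exact compl_compl M
    · intro s _
      exact compl_compl s
    · intro M _
      rw [compl_compl]
  -- final assembly
  calc (Matrix.det (Matrix.of fun i l : Fin k => b ((I.orderIsoOfFin hI) l).1 i)) ^ 2 * MA.det
      = ∑ s : Finset (Fin n),
          (Stmt12.ddet Bm I hI) ^ 2 * ((∏ i ∈ sᶜ, -(d i)) * (Rm s).det) := by
        rw [hMAdet, Finset.mul_sum]
        rfl
    _ = ∑ s ∈ Finset.powersetCard k (Finset.univ : Finset (Fin n)),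
          (-1 : ℂ) ^ (n - k) * ((dd2 s) ^ 2 * ∏ i ∈ sᶜ, d i) * (Rm I).det := by
        rw [Finset.sum_congr rfl (fun s _ => hL1 s), hL2]
        exact Finset.sum_congr rfl hL3
    _ = ((-1) ^ (n - k) *
          ∑ M ∈ (Finset.powersetCard (n - k) (Finset.univ : Finset (Fin n))).attach,
            (Matrix.det (Matrix.of fun i l : Fin k =>
                b (((M.1ᶜ).orderIsoOfFin (show (M.1)ᶜ.card = k by
                  rw [Finset.card_compl, (Finset.mem_powersetCard.mp M.2).2,
                    Fintype.card_fin]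
                  omega) l).1) i)) ^ 2
              * ∏ j ∈ M.1, a j / (p j) ^ 2) * MB.det := by
        rw [hMBdet, Finset.sum_congr rfl hR1, hR2, hR3, Finset.mul_sum, Finset.sum_mul]
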